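/- The second derivative of f satisfies f''(t) = α_1 α_2 · L(t) · P(t) / (Q_1(t) Q_2(t) Q_s(t))^2, where L = Q_1' Q_2 − Q_2' Q_1, Q_s = α_1 Q_1 + α_2 Q_2, and P = 3 L' Q_1 Q_2 Q_s − (Q_1 Q_2 Q_s)' L. -/

import Mathlib

lemma quadDeriv (c d x : ℝ) : HasDerivAt (fun t => t^2 + 2*t*c + d) (2*x + 2*c) x := by
  have h := ((hasDerivAt_pow 2 x).add (((hasDerivAt_id x).const_mul 2).mul_const c)).add_const d
  refine h.congr_deriv ?_
  push_cast
  ring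

lemma linDeriv (c x : ℝ) : HasDerivAt (fun t => 2*t + 2*c) 2 x := by
  have h := ((hasDerivAt_id x).const_mul 2).add_const (2*c)
  simpa using h

lemma quadPos (c d : ℝ) (h : c^2 < d) (x : ℝ) : (0:ℝ) < x^2 + 2*x*c + d := by
  nlinarith [sq_nonneg (x+c)]

set_option maxHeartbeats 1000000 in
lemma algAux (al be a b A B c C u Lv dLv dPv : ℝ) (hA : A ≠ 0) (hB : B ≠ 0) (hC : C ≠ 0)
    (hbe : be = 1 - al)
    (hc : c = al * a + be * b) (hCe : C = al * A + be * B) (hu : u = al * 2 + be * 2)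
    (hLv : Lv = a * B - b * A)
    (hdLv : dLv = 2 * (B - A))
    (hdPv : dPv = (a * B + A * b) * C + A * B * c) :
    al * (2 * (a / A - c / C) + (2 * (a / A - c / C)
        + a * ((2 * A - a * a) / A ^ 2 - (u * C - c * c) / C ^ 2)))
      + be * (2 * (b / B - c / C) + (2 * (b / B - c / C)
        + b * ((2 * B - b * b) / B ^ 2 - (u * C - c * c) / C ^ 2)))
    = al * be * Lv * (3 * dLv * (A * B * C) - dPv * Lv) / (A * B * C) ^ 2 := by
  subst hbe hc hCe hu hLv hdLv hdPv
  field_simp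
  ring

set_option maxHeartbeats 1000000 in
/-- The second derivative of `f` satisfies
`f''(t) = α₁ α₂ L(t) P(t) / (Q₁(t) Q₂(t) Q_s(t))^2`, where `L = Q₁' Q₂ − Q₂' Q₁`,
`Q_s = α₁ Q₁ + α₂ Q₂`, and `P = 3 L' Q₁ Q₂ Q_s − (Q₁ Q₂ Q_s)' L`. -/
theorem stmt_3 (α₁ α₂ ξ₁ ξ₂ η₁ η₂ : ℝ)
    (hα₁ : α₁ ∈ Set.Ioo (0 : ℝ) 1) (hα₂ : α₂ ∈ Set.Ioo (0 : ℝ) 1) (hsum : α₁ + α₂ = 1)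
    (h₁ : ξ₁ ^ 2 < η₁) (h₂ : ξ₂ ^ 2 < η₂)
    (Q₁ Q₂ Qs L P f : ℝ → ℝ)
    (hQ₁ : ∀ t, Q₁ t = t ^ 2 + 2 * t * ξ₁ + η₁)
    (hQ₂ : ∀ t, Q₂ t = t ^ 2 + 2 * t * ξ₂ + η₂)
    (hQs : ∀ t, Qs t = α₁ * Q₁ t + α₂ * Q₂ t)
    (hL : ∀ t, L t = 2 * (t + ξ₁) * Q₂ t - 2 * (t + ξ₂) * Q₁ t)
    (hP : ∀ t, P t = 3 * deriv L t * (Q₁ t * Q₂ t * Qs t)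
        - deriv (fun s => Q₁ s * Q₂ s * Qs s) t * L t)
    (hf : ∀ t, f t = α₁ * (2 * (t + ξ₁)) * Real.log (Q₁ t / Qs t)
        + α₂ * (2 * (t + ξ₂)) * Real.log (Q₂ t / Qs t)) (t : ℝ) :
    deriv (deriv f) t = α₁ * α₂ * L t * P t / (Q₁ t * Q₂ t * Qs t) ^ 2 := by
  obtain ⟨hA0, hA1⟩ := hα₁
  obtain ⟨hB0, hB1⟩ := hα₂
  have hq1 : ∀ x : ℝ, (0:ℝ) < x^2+2*x*ξ₁+η₁ := quadPos ξ₁ η₁ h₁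
  have hq2 : ∀ x : ℝ, (0:ℝ) < x^2+2*x*ξ₂+η₂ := quadPos ξ₂ η₂ h₂
  have hqs : ∀ x : ℝ, (0:ℝ) < α₁*(x^2+2*x*ξ₁+η₁) + α₂*(x^2+2*x*ξ₂+η₂) := by
    intro x
    have h1 := mul_pos hA0 (hq1 x)
    have h2 := mul_pos hB0 (hq2 x)
    linarith
  -- derivative of the mixture quadratic
  have hCq : ∀ x : ℝ, HasDerivAt (fun y => α₁*(y^2+2*y*ξ₁+η₁) + α₂*(y^2+2*y*ξ₂+η₂))
      (α₁*(2*x+2*ξ₁) + α₂*(2*x+2*ξ₂)) x := fun x =>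
    ((quadDeriv ξ₁ η₁ x).const_mul α₁).add ((quadDeriv ξ₂ η₂ x).const_mul α₂)
  have hclin : ∀ x : ℝ, HasDerivAt (fun y => α₁*(2*y+2*ξ₁) + α₂*(2*y+2*ξ₂))
      (α₁*2 + α₂*2) x := fun x =>
    ((linDeriv ξ₁ x).const_mul α₁).add ((linDeriv ξ₂ x).const_mul α₂)
  have hfe : f = fun x => α₁*((2*x+2*ξ₁)*(Real.log (x^2+2*x*ξ₁+η₁)
        - Real.log (α₁*(x^2+2*x*ξ₁+η₁) + α₂*(x^2+2*x*ξ₂+η₂))))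
      + α₂*((2*x+2*ξ₂)*(Real.log (x^2+2*x*ξ₂+η₂)
        - Real.log (α₁*(x^2+2*x*ξ₁+η₁) + α₂*(x^2+2*x*ξ₂+η₂)))) := by
    funext x
    rw [hf, hQs, hQ₁, hQ₂,
      Real.log_div (hq1 x).ne' (hqs x).ne', Real.log_div (hq2 x).ne' (hqs x).ne']
    ring
  have hG : deriv f = fun x =>
      α₁*(2*(Real.log (x^2+2*x*ξ₁+η₁) - Real.log (α₁*(x^2+2*x*ξ₁+η₁) + α₂*(x^2+2*x*ξ₂+η₂)))
        + (2*x+2*ξ₁)*((2*x+2*ξ₁)/(x^2+2*x*ξ₁+η₁)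
          - (α₁*(2*x+2*ξ₁) + α₂*(2*x+2*ξ₂))/(α₁*(x^2+2*x*ξ₁+η₁) + α₂*(x^2+2*x*ξ₂+η₂))))
      + α₂*(2*(Real.log (x^2+2*x*ξ₂+η₂) - Real.log (α₁*(x^2+2*x*ξ₁+η₁) + α₂*(x^2+2*x*ξ₂+η₂)))
        + (2*x+2*ξ₂)*((2*x+2*ξ₂)/(x^2+2*x*ξ₂+η₂)
          - (α₁*(2*x+2*ξ₁) + α₂*(2*x+2*ξ₂))/(α₁*(x^2+2*x*ξ₁+η₁) + α₂*(x^2+2*x*ξ₂+η₂)))) := by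
    funext x
    rw [hfe]
    exact ((((linDeriv ξ₁ x).mul (((quadDeriv ξ₁ η₁ x).log (hq1 x).ne').sub
        ((hCq x).log (hqs x).ne'))).const_mul α₁).add
      (((linDeriv ξ₂ x).mul (((quadDeriv ξ₂ η₂ x).log (hq2 x).ne').sub
        ((hCq x).log (hqs x).ne'))).const_mul α₂)).deriv
  have l1 := (quadDeriv ξ₁ η₁ t).log (hq1 t).ne'
  have l2 := (quadDeriv ξ₂ η₂ t).log (hq2 t).ne'
  have ls := (hCq t).log (hqs t).ne'
  have d1 := (linDeriv ξ₁ t).div (quadDeriv ξ₁ η₁ t) (hq1 t).ne'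
  have d2 := (linDeriv ξ₂ t).div (quadDeriv ξ₂ η₂ t) (hq2 t).ne'
  have ds := (hclin t).div (hCq t) (hqs t).ne'
  have key := ((((l1.sub ls).const_mul 2).add ((linDeriv ξ₁ t).mul (d1.sub ds))).const_mul α₁).add
    ((((l2.sub ls).const_mul 2).add ((linDeriv ξ₂ t).mul (d2.sub ds))).const_mul α₂)
  rw [hG]
  refine key.deriv.trans ?_
  have hdL : deriv L t = 2*1*(t^2+2*t*ξ₂+η₂) + 2*(t+ξ₁)*(2*t+2*ξ₂)
      - (2*1*(t^2+2*t*ξ₁+η₁) + 2*(t+ξ₂)*(2*t+2*ξ₁)) := by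
    have hLe : L = fun x => 2*(x+ξ₁)*(x^2+2*x*ξ₂+η₂) - 2*(x+ξ₂)*(x^2+2*x*ξ₁+η₁) :=
      funext fun x => by rw [hL, hQ₁, hQ₂]
    rw [hLe]
    exact (((((hasDerivAt_id t).add_const ξ₁).const_mul 2).mul (quadDeriv ξ₂ η₂ t)).sub
      ((((hasDerivAt_id t).add_const ξ₂).const_mul 2).mul (quadDeriv ξ₁ η₁ t))).deriv
  have hdProd : deriv (fun s => Q₁ s * Q₂ s * Qs s) t =
      ((2*t+2*ξ₁)*(t^2+2*t*ξ₂+η₂)+(t^2+2*t*ξ₁+η₁)*(2*t+2*ξ₂))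
          *(α₁*(t^2+2*t*ξ₁+η₁) + α₂*(t^2+2*t*ξ₂+η₂))
      + (t^2+2*t*ξ₁+η₁)*(t^2+2*t*ξ₂+η₂)*(α₁*(2*t+2*ξ₁) + α₂*(2*t+2*ξ₂)) := by
    have hPe : (fun s => Q₁ s * Q₂ s * Qs s)
        = fun x => (x^2+2*x*ξ₁+η₁)*(x^2+2*x*ξ₂+η₂)
            *(α₁*(x^2+2*x*ξ₁+η₁) + α₂*(x^2+2*x*ξ₂+η₂)) :=
      funext fun x => by rw [hQ₁, hQ₂, hQs, hQ₁, hQ₂]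
    rw [hPe]
    exact (((quadDeriv ξ₁ η₁ t).mul (quadDeriv ξ₂ η₂ t)).mul (hCq t)).deriv
  rw [hP, hdL, hdProd, hL, hQs, hQ₁, hQ₂]
  exact algAux α₁ α₂ (2*t+2*ξ₁) (2*t+2*ξ₂) (t^2+2*t*ξ₁+η₁) (t^2+2*t*ξ₂+η₂)
    (α₁*(2*t+2*ξ₁) + α₂*(2*t+2*ξ₂))
    (α₁*(t^2+2*t*ξ₁+η₁) + α₂*(t^2+2*t*ξ₂+η₂)) (α₁*2 + α₂*2)
    (2*(t+ξ₁)*(t^2+2*t*ξ₂+η₂) - 2*(t+ξ₂)*(t^2+2*t*ξ₁+η₁))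
    (2*1*(t^2+2*t*ξ₂+η₂) + 2*(t+ξ₁)*(2*t+2*ξ₂)
      - (2*1*(t^2+2*t*ξ₁+η₁) + 2*(t+ξ₂)*(2*t+2*ξ₁)))
    (((2*t+2*ξ₁)*(t^2+2*t*ξ₂+η₂)+(t^2+2*t*ξ₁+η₁)*(2*t+2*ξ₂))
          *(α₁*(t^2+2*t*ξ₁+η₁) + α₂*(t^2+2*t*ξ₂+η₂))
      + (t^2+2*t*ξ₁+η₁)*(t^2+2*t*ξ₂+η₂)*(α₁*(2*t+2*ξ₁) + α₂*(2*t+2*ξ₂)))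
    (hq1 t).ne' (hq2 t).ne' (hqs t).ne'
    (by linarith) (by ring) (by ring) (by ring) (by ring) (by ring) (by ring)
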